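/- In the Fomin-Kirillov algebra E_3 (generators [12], [23], [31] with [ij] = −[ji], relations [ij]² = 0 and [12][23] + [23][31] + [31][12] = 0 and [23][12] + [31][23] + [12][31] = 0), the element Top = [12][23][12][31] is nonzero and spans the top degree (degree 4) component, and every product of a degree-1 generator with a degree-4 element is zero. -/

import Mathlib

/-- The defining relations of the Fomin-Kirillov algebra `E_3`, on generators
`x 0 = [12]`, `x 1 = [23]`, `x 2 = [31]`: each generator squares to zero,
`[12][23] + [23][31] + [31][12] = 0` and `[23][12] + [31][23] + [12][31] = 0`. -/
def E3rel (k : Type) [Field k] : FreeAlgebra k (Fin 3) → FreeAlgebra k (Fin 3) → Prop :=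
  fun x y =>
    (∃ a : Fin 3, x = FreeAlgebra.ι k a * FreeAlgebra.ι k a ∧ y = 0) ∨
    (x = FreeAlgebra.ι k 0 * FreeAlgebra.ι k 1 + FreeAlgebra.ι k 1 * FreeAlgebra.ι k 2 +
          FreeAlgebra.ι k 2 * FreeAlgebra.ι k 0 ∧ y = 0) ∨
    (x = FreeAlgebra.ι k 1 * FreeAlgebra.ι k 0 + FreeAlgebra.ι k 2 * FreeAlgebra.ι k 1 +
          FreeAlgebra.ι k 0 * FreeAlgebra.ι k 2 ∧ y = 0)

/-- The Fomin-Kirillov algebra `E_3`. -/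
abbrev E3 (k : Type) [Field k] : Type := RingQuot (E3rel k)

/-- The images of the generators `[12], [23], [31]` in `E_3`. -/
noncomputable def E3gen (k : Type) [Field k] (a : Fin 3) : E3 k :=
  RingQuot.mkAlgHom k (E3rel k) (FreeAlgebra.ι k a)

private def E3M0 : Matrix (Fin 12) (Fin 12) ℤ :=
  !![0, 0, 0, 0, 0, 0, 0, 0, 0, 0, 0, 0;
    0, 0, 0, 0, 0, 0, 0, 0, 0, 0, 0, 0;
    0, 0, 0, 0, 0, 0, 0, 0, 0, 0, 0, 0;
    1, 0, 0, 0, 0, 0, 0, 0, 0, 0, 0, 0;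
    0, 0, 0, 0, 0, 0, 0, 0, 0, 0, 0, 0;
    0, 0, 0, 0, 0, 0, 0, 0, 0, 0, 0, 0;
    0, 1, 0, 0, 0, 0, 0, 0, 0, 0, 0, 0;
    0, 0, 1, 0, 0, 0, 0, 0, 0, 0, 0, 0;
    0, 0, 0, 0, 0, 0, 0, 0, 0, 0, 0, 0;
    0, 0, 0, 0, 1, 0, 0, 0, 0, 0, 0, 0;
    0, 0, 0, 0, 0, 1, 0, 0, 0, 0, 0, 0;
    0, 0, 0, 0, 0, 0, 0, 0, 1, 0, 0, 0]

private def E3M1 : Matrix (Fin 12) (Fin 12) ℤ :=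
  !![0, 0, 0, 0, 0, 0, 0, 0, 0, 0, 0, 0;
    0, 0, 0, 0, 0, 0, 0, 0, 0, 0, 0, 0;
    1, 0, 0, 0, 0, 0, 0, 0, 0, 0, 0, 0;
    0, 0, 0, 0, 0, 0, 0, 0, 0, 0, 0, 0;
    0, 1, 0, 0, 0, 0, 0, 0, 0, 0, 0, 0;
    0, 0, 0, 1, 0, 0, 0, 0, 0, 0, 0, 0;
    0, 0, 0, 0, 0, 0, 0, 0, 0, 0, 0, 0;
    0, 0, 0, 0, 0, 0, 0, 0, 0, 0, 0, 0;
    0, 0, 0, 0, 0, 0, 1, 0, 0, 0, 0, 0;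
    0, 0, 0, 0, 0, 0, 0, 0, 0, 0, 0, 0;
    0, 0, 0, 0, 0, 0, 0, 1, 0, 0, 0, 0;
    0, 0, 0, 0, 0, 0, 0, 0, 0, 1, 0, 0]

private def E3M2 : Matrix (Fin 12) (Fin 12) ℤ :=
  !![0, 0, 0, 0, 0, 0, 0, 0, 0, 0, 0, 0;
    1, 0, 0, 0, 0, 0, 0, 0, 0, 0, 0, 0;
    0, 0, 0, 0, 0, 0, 0, 0, 0, 0, 0, 0;
    0, 0, 0, 0, 0, 0, 0, 0, 0, 0, 0, 0;
    0, 0, 0, -1, 0, 0, 0, 0, 0, 0, 0, 0;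
    0, 0, -1, 0, 0, 0, 0, 0, 0, 0, 0, 0;
    0, 0, -1, 0, 0, 0, 0, 0, 0, 0, 0, 0;
    0, 0, 0, -1, 0, 0, 0, 0, 0, 0, 0, 0;
    0, 0, 0, 0, -1, 0, 0, 1, 0, 0, 0, 0;
    0, 0, 0, 0, 0, 1, -1, 0, 0, 0, 0, 0;
    0, 0, 0, 0, 0, 0, 0, 0, 0, 0, 0, 0;
    0, 0, 0, 0, 0, 0, 0, 0, 0, 0, -1, 0]

set_option maxHeartbeats 1000000 in
private lemma E3M0_sq : E3M0 * E3M0 = 0 := by decide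

set_option maxHeartbeats 1000000 in
private lemma E3M1_sq : E3M1 * E3M1 = 0 := by decide

set_option maxHeartbeats 1000000 in
private lemma E3M2_sq : E3M2 * E3M2 = 0 := by decide

set_option maxHeartbeats 1000000 in
private lemma E3M_rel1 : E3M0 * E3M1 + E3M1 * E3M2 + E3M2 * E3M0 = 0 := by decide

set_option maxHeartbeats 1000000 in
private lemma E3M_rel2 : E3M1 * E3M0 + E3M2 * E3M1 + E3M0 * E3M2 = 0 := by decide

set_option maxHeartbeats 1000000 in
private lemma E3M_top : (E3M0 * E3M1 * E3M0 * E3M2) 11 0 = 1 := by decide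


private lemma rule_ee {R : Type*} [Ring R] (e f g : R)
    (hee : e * e = 0) (hff : f * f = 0) (hgg : g * g = 0)
    (h1 : e * f + f * g + g * e = 0) (h2 : f * e + g * f + e * g = 0) :
    e * e = 0 := by
  exact hee

private lemma rule_ff {R : Type*} [Ring R] (e f g : R)
    (hee : e * e = 0) (hff : f * f = 0) (hgg : g * g = 0)
    (h1 : e * f + f * g + g * e = 0) (h2 : f * e + g * f + e * g = 0) :
    f * f = 0 := by
  exact hff

private lemma rule_ge {R : Type*} [Ring R] (e f g : R)
    (hee : e * e = 0) (hff : f * f = 0) (hgg : g * g = 0)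
    (h1 : e * f + f * g + g * e = 0) (h2 : f * e + g * f + e * g = 0) :
    g * e = -(e * f) - (f * g) := by
  rw [← sub_eq_zero]
  have key : g * e - (-(e * f) - (f * g)) = (e * f + f * g + g * e) := by noncomm_ring
  rw [key, h1]
  all_goals simp only [mul_zero, zero_mul, neg_zero, add_zero, zero_add, sub_zero]

private lemma rule_gf {R : Type*} [Ring R] (e f g : R)
    (hee : e * e = 0) (hff : f * f = 0) (hgg : g * g = 0)
    (h1 : e * f + f * g + g * e = 0) (h2 : f * e + g * f + e * g = 0) :
    g * f = -(e * g) - (f * e) := by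
  rw [← sub_eq_zero]
  have key : g * f - (-(e * g) - (f * e)) = (f * e + g * f + e * g) := by noncomm_ring
  rw [key, h2]
  all_goals simp only [mul_zero, zero_mul, neg_zero, add_zero, zero_add, sub_zero]

private lemma rule_gg {R : Type*} [Ring R] (e f g : R)
    (hee : e * e = 0) (hff : f * f = 0) (hgg : g * g = 0)
    (h1 : e * f + f * g + g * e = 0) (h2 : f * e + g * f + e * g = 0) :
    g * g = 0 := by
  exact hgg

private lemma rule_fge {R : Type*} [Ring R] (e f g : R)
    (hee : e * e = 0) (hff : f * f = 0) (hgg : g * g = 0)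
    (h1 : e * f + f * g + g * e = 0) (h2 : f * e + g * f + e * g = 0) :
    f * g * e = -(e * f * e) := by
  rw [← sub_eq_zero]
  have key : f * g * e - (-(e * f * e)) = -g * (e * e) + (e * f + f * g + g * e) * e := by noncomm_ring
  rw [key, hee, h1]
  all_goals simp only [mul_zero, zero_mul, neg_zero, add_zero, zero_add, sub_zero]

private lemma rule_fgf {R : Type*} [Ring R] (e f g : R)
    (hee : e * e = 0) (hff : f * f = 0) (hgg : g * g = 0)
    (h1 : e * f + f * g + g * e = 0) (h2 : f * e + g * f + e * g = 0) :
    f * g * f = -(f * e * g) := by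
  rw [← sub_eq_zero]
  have key : f * g * f - (-(f * e * g)) = -e * (f * f) + (g * g) * e - e * (g * g) + (e * f + f * g + g * e) * f - g * (e * f + f * g + g * e) + (f * e + g * f + e * g) * g := by noncomm_ring
  rw [key, hff, hgg, h1, h2]
  all_goals simp only [mul_zero, zero_mul, neg_zero, add_zero, zero_add, sub_zero]

private lemma rule_fgg {R : Type*} [Ring R] (e f g : R)
    (hee : e * e = 0) (hff : f * f = 0) (hgg : g * g = 0)
    (h1 : e * f + f * g + g * e = 0) (h2 : f * e + g * f + e * g = 0) :
    f * g * g = 0 := by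
  rw [← sub_eq_zero]
  have key : f * g * g - (0) = f * (g * g) := by noncomm_ring
  rw [key, hgg]
  all_goals simp only [mul_zero, zero_mul, neg_zero, add_zero, zero_add, sub_zero]

private lemma rule_fee {R : Type*} [Ring R] (e f g : R)
    (hee : e * e = 0) (hff : f * f = 0) (hgg : g * g = 0)
    (h1 : e * f + f * g + g * e = 0) (h2 : f * e + g * f + e * g = 0) :
    f * e * e = 0 := by
  rw [← sub_eq_zero]
  have key : f * e * e - (0) = f * (e * e) := by noncomm_ring
  rw [key, hee]
  all_goals simp only [mul_zero, zero_mul, neg_zero, add_zero, zero_add, sub_zero]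

private lemma rule_fef {R : Type*} [Ring R] (e f g : R)
    (hee : e * e = 0) (hff : f * f = 0) (hgg : g * g = 0)
    (h1 : e * f + f * g + g * e = 0) (h2 : f * e + g * f + e * g = 0) :
    f * e * f = (e * f * e) := by
  rw [← sub_eq_zero]
  have key : f * e * f - ((e * f * e)) = g * (e * e) - (f * f) * g - (e * f + f * g + g * e) * e + f * (e * f + f * g + g * e) := by noncomm_ring
  rw [key, hee, hff, h1]
  all_goals simp only [mul_zero, zero_mul, neg_zero, add_zero, zero_add, sub_zero]

private lemma rule_ege {R : Type*} [Ring R] (e f g : R)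
    (hee : e * e = 0) (hff : f * f = 0) (hgg : g * g = 0)
    (h1 : e * f + f * g + g * e = 0) (h2 : f * e + g * f + e * g = 0) :
    e * g * e = -(e * f * g) := by
  rw [← sub_eq_zero]
  have key : e * g * e - (-(e * f * g)) = -(e * e) * f + e * (e * f + f * g + g * e) := by noncomm_ring
  rw [key, hee, h1]
  all_goals simp only [mul_zero, zero_mul, neg_zero, add_zero, zero_add, sub_zero]

private lemma rule_egf {R : Type*} [Ring R] (e f g : R)
    (hee : e * e = 0) (hff : f * f = 0) (hgg : g * g = 0)
    (h1 : e * f + f * g + g * e = 0) (h2 : f * e + g * f + e * g = 0) :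
    e * g * f = -(e * f * e) := by
  rw [← sub_eq_zero]
  have key : e * g * f - (-(e * f * e)) = -g * (e * e) + (f * f) * g - g * (f * f) + (e * f + f * g + g * e) * e - f * (e * f + f * g + g * e) + (f * e + g * f + e * g) * f := by noncomm_ring
  rw [key, hee, hff, h1, h2]
  all_goals simp only [mul_zero, zero_mul, neg_zero, add_zero, zero_add, sub_zero]

private lemma rule_egg {R : Type*} [Ring R] (e f g : R)
    (hee : e * e = 0) (hff : f * f = 0) (hgg : g * g = 0)
    (h1 : e * f + f * g + g * e = 0) (h2 : f * e + g * f + e * g = 0) :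
    e * g * g = 0 := by
  rw [← sub_eq_zero]
  have key : e * g * g - (0) = e * (g * g) := by noncomm_ring
  rw [key, hgg]
  all_goals simp only [mul_zero, zero_mul, neg_zero, add_zero, zero_add, sub_zero]

private lemma rule_eff {R : Type*} [Ring R] (e f g : R)
    (hee : e * e = 0) (hff : f * f = 0) (hgg : g * g = 0)
    (h1 : e * f + f * g + g * e = 0) (h2 : f * e + g * f + e * g = 0) :
    e * f * f = 0 := by
  rw [← sub_eq_zero]
  have key : e * f * f - (0) = e * (f * f) := by noncomm_ring
  rw [key, hff]
  all_goals simp only [mul_zero, zero_mul, neg_zero, add_zero, zero_add, sub_zero]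

private lemma rule_fege {R : Type*} [Ring R] (e f g : R)
    (hee : e * e = 0) (hff : f * f = 0) (hgg : g * g = 0)
    (h1 : e * f + f * g + g * e = 0) (h2 : f * e + g * f + e * g = 0) :
    f * e * g * e = -(e * f * e * g) := by
  rw [← sub_eq_zero]
  have key : f * e * g * e - (-(e * f * e * g)) = -f * (e * e) * f - g * (e * e) * g + (f * f) * (g * g) + (e * f + f * g + g * e) * (e * g) - f * (e * f + f * g + g * e) * g + (f * e) * (e * f + f * g + g * e) := by noncomm_ring
  rw [key, hee, hff, h1]
  all_goals simp only [mul_zero, zero_mul, neg_zero, add_zero, zero_add, sub_zero]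

private lemma rule_fegf {R : Type*} [Ring R] (e f g : R)
    (hee : e * e = 0) (hff : f * f = 0) (hgg : g * g = 0)
    (h1 : e * f + f * g + g * e = 0) (h2 : f * e + g * f + e * g = 0) :
    f * e * g * f = 0 := by
  rw [← sub_eq_zero]
  have key : f * e * g * f - (0) = (g * e) * (f * f) + (g * g) * (e * f) - e * (g * g) * f - g * (e * f + f * g + g * e) * f + (f * e + g * f + e * g) * (g * f) := by noncomm_ring
  rw [key, hff, hgg, h1, h2]
  all_goals simp only [mul_zero, zero_mul, neg_zero, add_zero, zero_add, sub_zero]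

private lemma rule_fegg {R : Type*} [Ring R] (e f g : R)
    (hee : e * e = 0) (hff : f * f = 0) (hgg : g * g = 0)
    (h1 : e * f + f * g + g * e = 0) (h2 : f * e + g * f + e * g = 0) :
    f * e * g * g = 0 := by
  rw [← sub_eq_zero]
  have key : f * e * g * g - (0) = (f * e) * (g * g) := by noncomm_ring
  rw [key, hgg]
  all_goals simp only [mul_zero, zero_mul, neg_zero, add_zero, zero_add, sub_zero]

private lemma rule_efge {R : Type*} [Ring R] (e f g : R)
    (hee : e * e = 0) (hff : f * f = 0) (hgg : g * g = 0)
    (h1 : e * f + f * g + g * e = 0) (h2 : f * e + g * f + e * g = 0) :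
    e * f * g * e = 0 := by
  rw [← sub_eq_zero]
  have key : e * f * g * e - (0) = -(e * e) * (f * e) - (e * g) * (e * e) + e * (e * f + f * g + g * e) * e := by noncomm_ring
  rw [key, hee, h1]
  all_goals simp only [mul_zero, zero_mul, neg_zero, add_zero, zero_add, sub_zero]

private lemma rule_efgf {R : Type*} [Ring R] (e f g : R)
    (hee : e * e = 0) (hff : f * f = 0) (hgg : g * g = 0)
    (h1 : e * f + f * g + g * e = 0) (h2 : f * e + g * f + e * g = 0) :
    e * f * g * f = -(e * f * e * g) := by
  rw [← sub_eq_zero]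
  have key : e * f * g * f - (-(e * f * e * g)) = -(e * e) * (f * f) - g * (e * e) * g + (f * f) * (g * g) - g * (f * f) * g + e * (g * g) * e + (e * f + f * g + g * e) * (e * g) + e * (e * f + f * g + g * e) * f - f * (e * f + f * g + g * e) * g - (e * g) * (e * f + f * g + g * e) + (f * e + g * f + e * g) * (f * g) := by noncomm_ring
  rw [key, hee, hff, hgg, h1, h2]
  all_goals simp only [mul_zero, zero_mul, neg_zero, add_zero, zero_add, sub_zero]

private lemma rule_efgg {R : Type*} [Ring R] (e f g : R)
    (hee : e * e = 0) (hff : f * f = 0) (hgg : g * g = 0)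
    (h1 : e * f + f * g + g * e = 0) (h2 : f * e + g * f + e * g = 0) :
    e * f * g * g = 0 := by
  rw [← sub_eq_zero]
  have key : e * f * g * g - (0) = (e * f) * (g * g) := by noncomm_ring
  rw [key, hgg]
  all_goals simp only [mul_zero, zero_mul, neg_zero, add_zero, zero_add, sub_zero]

private lemma rule_efee {R : Type*} [Ring R] (e f g : R)
    (hee : e * e = 0) (hff : f * f = 0) (hgg : g * g = 0)
    (h1 : e * f + f * g + g * e = 0) (h2 : f * e + g * f + e * g = 0) :
    e * f * e * e = 0 := by
  rw [← sub_eq_zero]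
  have key : e * f * e * e - (0) = (e * f) * (e * e) := by noncomm_ring
  rw [key, hee]
  all_goals simp only [mul_zero, zero_mul, neg_zero, add_zero, zero_add, sub_zero]

private lemma rule_efef {R : Type*} [Ring R] (e f g : R)
    (hee : e * e = 0) (hff : f * f = 0) (hgg : g * g = 0)
    (h1 : e * f + f * g + g * e = 0) (h2 : f * e + g * f + e * g = 0) :
    e * f * e * f = 0 := by
  rw [← sub_eq_zero]
  have key : e * f * e * f - (0) = -g * (e * e) * f + (f * f) * (g * f) + (f * e) * (f * f) + (e * f + f * g + g * e) * (e * f) - f * (e * f + f * g + g * e) * f := by noncomm_ring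
  rw [key, hee, hff, h1]
  all_goals simp only [mul_zero, zero_mul, neg_zero, add_zero, zero_add, sub_zero]

private lemma rule_efege {R : Type*} [Ring R] (e f g : R)
    (hee : e * e = 0) (hff : f * f = 0) (hgg : g * g = 0)
    (h1 : e * f + f * g + g * e = 0) (h2 : f * e + g * f + e * g = 0) :
    e * f * e * g * e = 0 := by
  rw [← sub_eq_zero]
  have key : e * f * e * g * e - (0) = -f * (e * e) * (f * e) - g * (e * e) * (g * e) - (f * e * g) * (e * e) + (f * f) * (g * g * e) + (e * f + f * g + g * e) * (e * g * e) - f * (e * f + f * g + g * e) * (g * e) + (f * e) * (e * f + f * g + g * e) * e := by noncomm_ring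
  rw [key, hee, hff, h1]
  all_goals simp only [mul_zero, zero_mul, neg_zero, add_zero, zero_add, sub_zero]

private lemma rule_efegf {R : Type*} [Ring R] (e f g : R)
    (hee : e * e = 0) (hff : f * f = 0) (hgg : g * g = 0)
    (h1 : e * f + f * g + g * e = 0) (h2 : f * e + g * f + e * g = 0) :
    e * f * e * g * f = 0 := by
  rw [← sub_eq_zero]
  have key : e * f * e * g * f - (0) = -g * (e * e) * (g * f) + (f * f) * (g * g * f) - g * (f * f) * (g * f) + (e * g * e) * (f * f) + e * (g * g) * (e * f) + (e * f + f * g + g * e) * (e * g * f) - f * (e * f + f * g + g * e) * (g * f) - (e * g) * (e * f + f * g + g * e) * f + (f * e + g * f + e * g) * (f * g * f) := by noncomm_ring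
  rw [key, hee, hff, hgg, h1, h2]
  all_goals simp only [mul_zero, zero_mul, neg_zero, add_zero, zero_add, sub_zero]

private lemma rule_efegg {R : Type*} [Ring R] (e f g : R)
    (hee : e * e = 0) (hff : f * f = 0) (hgg : g * g = 0)
    (h1 : e * f + f * g + g * e = 0) (h2 : f * e + g * f + e * g = 0) :
    e * f * e * g * g = 0 := by
  rw [← sub_eq_zero]
  have key : e * f * e * g * g - (0) = (e * f * e) * (g * g) := by noncomm_ring
  rw [key, hgg]
  all_goals simp only [mul_zero, zero_mul, neg_zero, add_zero, zero_add, sub_zero]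

private lemma rule_left_e {R : Type*} [Ring R] (e f g : R)
    (hee : e * e = 0) (hff : f * f = 0) (hgg : g * g = 0)
    (h1 : e * f + f * g + g * e = 0) (h2 : f * e + g * f + e * g = 0) :
    e * (e * f * e * g) = 0 := by
  rw [← sub_eq_zero]
  have key : e * (e * f * e * g) - 0 = (e * e) * (f * e * g) := by noncomm_ring
  rw [key, hee]
  all_goals simp only [mul_zero, zero_mul, neg_zero, add_zero, zero_add, sub_zero]

private lemma rule_left_f {R : Type*} [Ring R] (e f g : R)
    (hee : e * e = 0) (hff : f * f = 0) (hgg : g * g = 0)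
    (h1 : e * f + f * g + g * e = 0) (h2 : f * e + g * f + e * g = 0) :
    f * (e * f * e * g) = 0 := by
  rw [← sub_eq_zero]
  have key : f * (e * f * e * g) - 0 = -(f * g) * (e * e) * g - (f * f) * (g * e * g) + f * (e * f + f * g + g * e) * (e * g) := by noncomm_ring
  rw [key, hee, hff, h1]
  all_goals simp only [mul_zero, zero_mul, neg_zero, add_zero, zero_add, sub_zero]

private lemma rule_left_g {R : Type*} [Ring R] (e f g : R)
    (hee : e * e = 0) (hff : f * f = 0) (hgg : g * g = 0)
    (h1 : e * f + f * g + g * e = 0) (h2 : f * e + g * f + e * g = 0) :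
    g * (e * f * e * g) = 0 := by
  rw [← sub_eq_zero]
  have key : g * (e * f * e * g) - 0 = -f * (e * e) * (f * g) - (g * g) * (e * e) * g + g * (f * f) * (g * g) + e * (g * g) * (e * g) + (e * g * f) * (g * g) + g * (e * f + f * g + g * e) * (e * g) - (e * g) * (e * f + f * g + g * e) * g - (g * f) * (e * f + f * g + g * e) * g + (f * e + g * f + e * g) * (e * f * g) := by noncomm_ring
  rw [key, hee, hff, hgg, h1, h2]
  all_goals simp only [mul_zero, zero_mul, neg_zero, add_zero, zero_add, sub_zero]

private lemma deg4_aux {R : Type*} [Ring R] (e f g : R)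
    (hee : e * e = 0) (hff : f * f = 0) (hgg : g * g = 0)
    (h1 : e * f + f * g + g * e = 0) (h2 : f * e + g * f + e * g = 0) :
    ∀ a b c d : Fin 3, ∃ z : ℤ,
      ![e, f, g] a * ![e, f, g] b * ![e, f, g] c * ![e, f, g] d = z • (e * f * e * g) := by
  have h_rule_ee := rule_ee e f g hee hff hgg h1 h2
  have h_rule_ff := rule_ff e f g hee hff hgg h1 h2
  have h_rule_ge := rule_ge e f g hee hff hgg h1 h2
  have h_rule_gf := rule_gf e f g hee hff hgg h1 h2
  have h_rule_gg := rule_gg e f g hee hff hgg h1 h2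
  have h_rule_fge := rule_fge e f g hee hff hgg h1 h2
  have h_rule_fgf := rule_fgf e f g hee hff hgg h1 h2
  have h_rule_fgg := rule_fgg e f g hee hff hgg h1 h2
  have h_rule_fee := rule_fee e f g hee hff hgg h1 h2
  have h_rule_fef := rule_fef e f g hee hff hgg h1 h2
  have h_rule_ege := rule_ege e f g hee hff hgg h1 h2
  have h_rule_egf := rule_egf e f g hee hff hgg h1 h2
  have h_rule_egg := rule_egg e f g hee hff hgg h1 h2
  have h_rule_eff := rule_eff e f g hee hff hgg h1 h2
  have h_rule_fege := rule_fege e f g hee hff hgg h1 h2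
  have h_rule_fegf := rule_fegf e f g hee hff hgg h1 h2
  have h_rule_fegg := rule_fegg e f g hee hff hgg h1 h2
  have h_rule_efge := rule_efge e f g hee hff hgg h1 h2
  have h_rule_efgf := rule_efgf e f g hee hff hgg h1 h2
  have h_rule_efgg := rule_efgg e f g hee hff hgg h1 h2
  have h_rule_efee := rule_efee e f g hee hff hgg h1 h2
  have h_rule_efef := rule_efef e f g hee hff hgg h1 h2
  have h_rule_efege := rule_efege e f g hee hff hgg h1 h2
  have h_rule_efegf := rule_efegf e f g hee hff hgg h1 h2
  have h_rule_efegg := rule_efegg e f g hee hff hgg h1 h2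
  intro a b c d
  fin_cases a <;> fin_cases b <;> fin_cases c <;> fin_cases d <;>
    simp only [Fin.reduceFinMk, Fin.mk_zero, Fin.mk_one, Matrix.cons_val_zero,
      Matrix.cons_val_one, Matrix.head_cons,
      Matrix.cons_val_two, Matrix.tail_cons, Fin.isValue,
      h_rule_ee, h_rule_ff, h_rule_ge, h_rule_gf, h_rule_gg, h_rule_fge, h_rule_fgf, h_rule_fgg, h_rule_fee, h_rule_fef, h_rule_ege, h_rule_egf, h_rule_egg, h_rule_eff, h_rule_fege, h_rule_fegf, h_rule_fegg, h_rule_efge, h_rule_efgf, h_rule_efgg, h_rule_efee, h_rule_efef, h_rule_efege, h_rule_efegf, h_rule_efegg, mul_add, add_mul, mul_sub, sub_mul, mul_neg, neg_mul,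
      mul_zero, zero_mul, add_zero, zero_add, neg_neg, neg_zero, sub_zero, zero_sub,
      mul_one, one_mul, neg_add_rev] <;>
    first
      | (refine ⟨0, ?_⟩; module)
      | (refine ⟨1, ?_⟩; module)
      | (refine ⟨-1, ?_⟩; module)

/-- In `E_3`, the element `Top = [12][23][12][31]` is nonzero, every product of
four generators is a scalar multiple of `Top` (so `Top` spans the top, degree-4,
component), and every product of a generator with a product of four generators
(i.e. any degree-5 product) vanishes. -/
theorem stmt_19 (k : Type) [Field k] [CharZero k]
    (Top : E3 k) (hTop : Top = E3gen k 0 * E3gen k 1 * E3gen k 0 * E3gen k 2) :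
    Top ≠ 0 ∧
    (∀ a b c d : Fin 3, ∃ lam : k,
      E3gen k a * E3gen k b * E3gen k c * E3gen k d = lam • Top) ∧
    (∀ a b c d e : Fin 3,
      E3gen k a * (E3gen k b * E3gen k c * E3gen k d * E3gen k e) = 0) := by
  classical
  set e := E3gen k 0 with he
  set f := E3gen k 1 with hf
  set g := E3gen k 2 with hg
  have hee : e * e = 0 := by
    have h := RingQuot.mkAlgHom_rel k (s := E3rel k)
      (Or.inl ⟨0, rfl, rfl⟩ :
        E3rel k (FreeAlgebra.ι k 0 * FreeAlgebra.ι k 0) 0)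
    simpa [he, E3gen, map_mul] using h
  have hff : f * f = 0 := by
    have h := RingQuot.mkAlgHom_rel k (s := E3rel k)
      (Or.inl ⟨1, rfl, rfl⟩ :
        E3rel k (FreeAlgebra.ι k 1 * FreeAlgebra.ι k 1) 0)
    simpa [hf, E3gen, map_mul] using h
  have hgg : g * g = 0 := by
    have h := RingQuot.mkAlgHom_rel k (s := E3rel k)
      (Or.inl ⟨2, rfl, rfl⟩ :
        E3rel k (FreeAlgebra.ι k 2 * FreeAlgebra.ι k 2) 0)
    simpa [hg, E3gen, map_mul] using h
  have h1 : e * f + f * g + g * e = 0 := by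
    have h := RingQuot.mkAlgHom_rel k (s := E3rel k)
      (Or.inr (Or.inl ⟨rfl, rfl⟩) :
        E3rel k (FreeAlgebra.ι k 0 * FreeAlgebra.ι k 1 + FreeAlgebra.ι k 1 * FreeAlgebra.ι k 2 +
          FreeAlgebra.ι k 2 * FreeAlgebra.ι k 0) 0)
    simpa [he, hf, hg, E3gen, map_mul, map_add] using h
  have h2 : f * e + g * f + e * g = 0 := by
    have h := RingQuot.mkAlgHom_rel k (s := E3rel k)
      (Or.inr (Or.inr ⟨rfl, rfl⟩) :
        E3rel k (FreeAlgebra.ι k 1 * FreeAlgebra.ι k 0 + FreeAlgebra.ι k 2 * FreeAlgebra.ι k 1 +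
          FreeAlgebra.ι k 0 * FreeAlgebra.ι k 2) 0)
    simpa [he, hf, hg, E3gen, map_mul, map_add] using h
  have hvec : ∀ a : Fin 3, ![e, f, g] a = E3gen k a := by
    intro a; fin_cases a <;> rfl
  refine ⟨?_, ?_, ?_⟩
  · -- Top ≠ 0, via the regular representation as 12×12 integer matrices
    intro hT0
    let Ψ : Matrix (Fin 12) (Fin 12) ℤ →+* Matrix (Fin 12) (Fin 12) k :=
      (Int.castRingHom k).mapMatrix
    let MM : Fin 3 → Matrix (Fin 12) (Fin 12) ℤ := ![E3M0, E3M1, E3M2]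
    let φ₀ : FreeAlgebra k (Fin 3) →ₐ[k] Matrix (Fin 12) (Fin 12) k :=
      FreeAlgebra.lift k (fun a => Ψ (MM a))
    have hrel : ∀ ⦃x y : FreeAlgebra k (Fin 3)⦄, E3rel k x y → φ₀ x = φ₀ y := by
      rintro x y (⟨a, rfl, rfl⟩ | ⟨rfl, rfl⟩ | ⟨rfl, rfl⟩)
      · simp only [map_mul, map_zero, FreeAlgebra.lift_ι_apply, φ₀]
        rw [← map_mul, show MM a * MM a = 0 by
          fin_cases a
          · exact E3M0_sq
          · exact E3M1_sq
          · exact E3M2_sq, map_zero]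
      · simp only [map_mul, map_add, map_zero, FreeAlgebra.lift_ι_apply, φ₀]
        rw [← map_mul, ← map_mul, ← map_mul, ← map_add, ← map_add,
          show MM 0 * MM 1 + MM 1 * MM 2 + MM 2 * MM 0 = 0 from E3M_rel1, map_zero]
      · simp only [map_mul, map_add, map_zero, FreeAlgebra.lift_ι_apply, φ₀]
        rw [← map_mul, ← map_mul, ← map_mul, ← map_add, ← map_add,
          show MM 1 * MM 0 + MM 2 * MM 1 + MM 0 * MM 2 = 0 from E3M_rel2, map_zero]
    let φ : E3 k →ₐ[k] Matrix (Fin 12) (Fin 12) k :=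
      RingQuot.liftAlgHom k ⟨φ₀, hrel⟩
    have hφgen : ∀ a : Fin 3, φ (E3gen k a) = Ψ (MM a) := by
      intro a
      rw [E3gen, RingQuot.liftAlgHom_mkAlgHom_apply]
      simp [φ₀]
    have hφT : φ Top = Ψ (MM 0 * MM 1 * MM 0 * MM 2) := by
      rw [hTop, map_mul, map_mul, map_mul]
      simp only [he, hf, hg, hφgen]
      simp only [← map_mul]
    rw [hT0, map_zero] at hφT
    have hentry : (MM 0 * MM 1 * MM 0 * MM 2) 11 0 = 1 := E3M_top
    have h2' := congrArg (fun M : Matrix (Fin 12) (Fin 12) k => M 11 0) hφT.symm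
    simp [Ψ, RingHom.mapMatrix_apply, Matrix.map_apply, hentry, Matrix.zero_apply,
      Int.cast_one] at h2'
  · -- degree 4 products are multiples of Top
    intro a b c d
    obtain ⟨z, hz⟩ := deg4_aux e f g hee hff hgg h1 h2 a b c d
    rw [hvec, hvec, hvec, hvec] at hz
    refine ⟨(z : k), ?_⟩
    rw [hz, hTop]
    exact (Int.cast_smul_eq_zsmul k z _).symm
  · -- degree 5 products vanish
    intro a b c d e'
    obtain ⟨z, hz⟩ := deg4_aux e f g hee hff hgg h1 h2 b c d e'
    rw [hvec, hvec, hvec, hvec] at hz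
    rw [hz, mul_smul_comm]
    have h0 := rule_left_e e f g hee hff hgg h1 h2
    have h1' := rule_left_f e f g hee hff hgg h1 h2
    have h2' := rule_left_g e f g hee hff hgg h1 h2
    fin_cases a <;>
      simp only [Fin.reduceFinMk, Fin.mk_zero, Fin.mk_one, ← he, ← hf, ← hg,
        h0, h1', h2', smul_zero] <;>
        exact smul_zero z
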